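/- Let G be a digraph on n vertices with metric dimension 1, witnessed by a single vertex w such that the map v ↦ d(w,v) is injective on V(G) (with values in ℕ ∪ {∞}). Then either (1) G has a directed Hamiltonian path (v₁, v₂, …, v_n) such that there is no arc from v_i to v_j whenever i < j−1, or (2) G has a source vertex whose removal yields a digraph with a directed Hamiltonian path (v₁, …, v_{n−1}) with no arc from v_i to v_j whenever i < j−1. -/

import Mathlib

/-- A directed walk of length `n` from `u` to `v` along the arc relation `A`. -/
def IsDWalk {V : Type*} (A : V → V → Prop) {n : ℕ} (f : Fin (n + 1) → V) (u v : V) : Prop :=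
  f 0 = u ∧ f (Fin.last n) = v ∧ ∀ i : Fin n, A (f i.castSucc) (f i.succ)

/-- Directed distance: the length of a shortest directed path from `u` to `v`,
`⊤` (infinity) if there is no directed path. -/
noncomputable def ddist {V : Type*} (A : V → V → Prop) (u v : V) : ℕ∞ :=
  sInf {m : ℕ∞ | ∃ (n : ℕ) (f : Fin (n + 1) → V), IsDWalk A f u v ∧ m = (n : ℕ∞)}

def NWalkSet {V : Type*} (A : V → V → Prop) (u v : V) : Set ℕ∞ :=
  {m : ℕ∞ | ∃ n : ℕ, ∃ f : ℕ → V,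
    f 0 = u ∧ f n = v ∧ (∀ i < n, A (f i) (f (i+1))) ∧ m = (n : ℕ∞)}

lemma ddist_eq {V : Type*} (A : V → V → Prop) (u v : V) :
    ddist A u v = sInf (NWalkSet A u v) := by
  unfold ddist NWalkSet
  congr 1
  ext m
  constructor
  · rintro ⟨n, f, ⟨h0, hl, ha⟩, rfl⟩
    refine ⟨n, fun i => f ⟨min i n, by omega⟩, ?_, ?_, ?_, rfl⟩
    · simpa using h0
    · simpa [Fin.last] using hl
    · intro i hi
      have := ha ⟨i, hi⟩
      have e1 : (Fin.castSucc ⟨i, hi⟩ : Fin (n+1)) = ⟨min i n, by omega⟩ := by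
        ext; simp; omega
      have e2 : (Fin.succ ⟨i, hi⟩ : Fin (n+1)) = ⟨min (i+1) n, by omega⟩ := by
        ext; simp; omega
      rwa [e1, e2] at this
  · rintro ⟨n, f, h0, hl, ha, rfl⟩
    refine ⟨n, fun i => f i.val, ⟨h0, by simpa [Fin.last] using hl, ?_⟩, rfl⟩
    intro i
    simpa using ha i.val i.isLt

lemma ddist_self {V : Type*} (A : V → V → Prop) (w : V) : ddist A w w = 0 := by
  rw [ddist_eq]
  refine le_antisymm (sInf_le ⟨0, fun _ => w, rfl, rfl, by omega, rfl⟩) zero_le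

lemma ddist_mem {V : Type*} (A : V → V → Prop) {w v : V} (h : ddist A w v ≠ ⊤) :
    ddist A w v ∈ NWalkSet A w v := by
  rw [ddist_eq] at h ⊢
  refine csInf_mem ?_
  rcases Set.eq_empty_or_nonempty (NWalkSet A w v) with he | hne
  · rw [he, sInf_empty] at h; exact absurd rfl h
  · exact hne

lemma ddist_le_arc {V : Type*} {A : V → V → Prop} {w u v : V} (h : A u v) :
    ddist A w v ≤ ddist A w u + 1 := by
  rcases eq_or_ne (ddist A w u) ⊤ with ht | ht
  · simp [ht]
  obtain ⟨n, f, h0, hl, ha, hm⟩ := ddist_mem A ht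
  rw [ddist_eq, hm]
  refine sInf_le ⟨n + 1, fun i => if i = n + 1 then v else f i, by simp [h0], by simp, ?_, by
    push_cast; ring⟩
  intro i hi
  simp only
  rcases Nat.lt_or_ge i n with hin | hin
  · rw [if_neg (by omega), if_neg (by omega)]
    exact ha i hin
  · have hi' : i = n := by omega
    rw [if_neg (by omega), if_pos (by omega), hi', hl]
    exact h

lemma ddist_zero {V : Type*} {A : V → V → Prop} {w v : V} (h : ddist A w v = 0) : v = w := by
  have := ddist_mem A (by rw [h]; simp : ddist A w v ≠ ⊤)
  rw [h] at this
  obtain ⟨n, f, h0, hl, _, hm⟩ := this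
  have : n = 0 := by exact_mod_cast hm.symm
  subst this
  rw [← hl, h0]

lemma ddist_pred {V : Type*} {A : V → V → Prop} {w v : V} {k : ℕ}
    (h : ddist A w v = ((k + 1 : ℕ) : ℕ∞)) :
    ∃ u, A u v ∧ ddist A w u = (k : ℕ∞) := by
  obtain ⟨n, f, h0, hl, ha, hm⟩ := ddist_mem A (by rw [h]; exact WithTop.natCast_ne_top _)
  rw [h] at hm
  have hn : n = k + 1 := ((by exact_mod_cast hm : (k+1:ℕ) = n)).symm
  subst hn
  refine ⟨f k, by rw [← hl]; exact ha k (by omega), ?_⟩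
  have hle : ddist A w (f k) ≤ (k : ℕ∞) := by
    rw [ddist_eq]
    exact sInf_le ⟨k, f, h0, rfl, fun i hi => ha i (by omega), rfl⟩
  have hge : (k : ℕ∞) ≤ ddist A w (f k) := by
    have h1 : ddist A w v ≤ ddist A w (f k) + 1 :=
      ddist_le_arc (by rw [← hl]; exact ha k (by omega))
    rw [h] at h1
    have : ((k : ℕ∞) + 1 ≤ ddist A w (f k) + 1) := by
      refine le_trans (le_of_eq ?_) h1
      push_cast; ring
    exact (WithTop.add_le_add_iff_right (by exact ENat.one_ne_top)).mp this
  exact le_antisymm hle hge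


/-- If a digraph `G` (simple and oriented) on `n` vertices has metric dimension 1,
witnessed by a vertex `w` whose distance map is injective, then either `G` has a
directed Hamiltonian path with no forward "skipping" arcs, or `G` has a source vertex
whose removal yields such a Hamiltonian path. -/
theorem metricDim_one_structure {V : Type*} [Fintype V] (A : V → V → Prop)
    (hirr : Irreflexive A) (horiented : ∀ u v : V, A u v → ¬ A v u)
    (n : ℕ) (hn : Fintype.card V = n)
    (w : V) (hres : Function.Injective fun v => ddist A w v) :
    (∃ e : Fin n ≃ V,
      (∀ i j : Fin n, (i : ℕ) + 1 = (j : ℕ) → A (e i) (e j)) ∧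
      (∀ i j : Fin n, (i : ℕ) + 1 < (j : ℕ) → ¬ A (e i) (e j))) ∨
    (∃ s : V, (∀ v : V, ¬ A v s) ∧
      ∃ e : Fin (n - 1) ≃ {v : V // v ≠ s},
        (∀ i j : Fin (n - 1), (i : ℕ) + 1 = (j : ℕ) → A (e i).1 (e j).1) ∧
        (∀ i j : Fin (n - 1), (i : ℕ) + 1 < (j : ℕ) → ¬ A (e i).1 (e j).1)) := by

  classical
  have hginj : Function.Injective (fun v => ddist A w v) := hres
  set g : V → ℕ∞ := fun v => ddist A w v with hgdef
  set T : Finset V := Finset.univ.filter (fun v => g v ≠ ⊤) with hT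
  set m := T.card with hm
  set I : Finset ℕ := T.image (fun v => (g v).toNat) with hI
  have hmemT : ∀ v, v ∈ T ↔ g v ≠ ⊤ := by intro v; simp [hT]
  have hcoe : ∀ v ∈ T, ((g v).toNat : ℕ∞) = g v := fun v hv => ENat.coe_toNat ((hmemT v).1 hv)
  have hcardI : I.card = m :=
    Finset.card_image_of_injOn (fun v hv u hu hvu =>
      hginj (by show g v = g u; rw [← hcoe v hv, ← hcoe u hu, hvu]))
  have hdown : ∀ k, k + 1 ∈ I → k ∈ I := by
    intro k hk
    simp only [hI, Finset.mem_image] at hk ⊢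
    obtain ⟨v, hv, hvk⟩ := hk
    have hgv : g v = ((k + 1 : ℕ) : ℕ∞) := by rw [← hcoe v hv, hvk]
    obtain ⟨u, _, hgu⟩ := ddist_pred hgv
    refine ⟨u, (hmemT u).2 (by rw [show g u = _ from hgu]; exact WithTop.natCast_ne_top _), ?_⟩
    rw [show g u = _ from hgu]; simp
  have hdc : ∀ x, x ∈ I → ∀ k, k ≤ x → k ∈ I := by
    intro x
    induction x with
    | zero => intro hx k hk; have : k = 0 := by omega
              rwa [this]
    | succ x ih =>
      intro hx k hk
      rcases eq_or_lt_of_le hk with rfl | hk'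
      · exact hx
      · exact ih (hdown x hx) k (by omega)
  have hIr : I = Finset.range m := by
    have hsub : I ⊆ Finset.range m := by
      intro x hx
      by_contra hxm
      have h1 : Finset.range (x + 1) ⊆ I := fun k hk =>
        hdc x hx k (by simpa [Nat.lt_succ_iff] using Finset.mem_range.mp hk)
      have h2 := Finset.card_le_card h1
      rw [Finset.card_range, hcardI] at h2
      rw [Finset.mem_range] at hxm
      omega
    exact (Finset.eq_of_subset_of_card_le hsub (by rw [Finset.card_range, hcardI]))
  have hmemI : ∀ v ∈ T, (g v).toNat < m := by
    intro v hv
    have : (g v).toNat ∈ I := Finset.mem_image_of_mem _ hv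
    rw [hIr, Finset.mem_range] at this
    exact this
  let φ : {v // v ∈ T} → Fin m := fun v => ⟨(g v.1).toNat, hmemI v.1 v.2⟩
  have hφinj : Function.Injective φ := by
    intro a b hab
    have h1 := congrArg Fin.val hab
    exact Subtype.ext (hginj (show g a.1 = g b.1 by
      rw [← hcoe a.1 a.2, ← hcoe b.1 b.2]; exact_mod_cast h1))
  have hφbij : Function.Bijective φ :=
    (Fintype.bijective_iff_injective_and_card φ).mpr ⟨hφinj, by simp [Fintype.card_coe, hm]⟩
  let e₀ : Fin m ≃ {v // v ∈ T} := (Equiv.ofBijective φ hφbij).symm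
  have he₀ : ∀ i : Fin m, g (e₀ i).1 = ((i : ℕ) : ℕ∞) := by
    intro i
    have h1 : φ (e₀ i) = i := (Equiv.ofBijective φ hφbij).apply_symm_apply i
    have h2 : (g (e₀ i).1).toNat = (i : ℕ) := congrArg Fin.val h1
    rw [← hcoe (e₀ i).1 (e₀ i).2, h2]
  have harcs : ∀ (N : ℕ) (e' : Fin N → V), (∀ i, g (e' i) = ((i : ℕ) : ℕ∞)) →
      (∀ i j : Fin N, (i : ℕ) + 1 = (j : ℕ) → A (e' i) (e' j)) ∧
      (∀ i j : Fin N, (i : ℕ) + 1 < (j : ℕ) → ¬ A (e' i) (e' j)) := by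
    intro N e' he'
    constructor
    · intro i j hij
      have hj : g (e' j) = (((i : ℕ) + 1 : ℕ) : ℕ∞) := by rw [he' j, ← hij]
      obtain ⟨u, hu, hgu⟩ := ddist_pred hj
      have : u = e' i := hginj (show g u = g (e' i) by rw [show g u = _ from hgu, he' i])
      rwa [← this]
    · intro i j hij hA
      have h1 : g (e' j) ≤ g (e' i) + 1 := ddist_le_arc hA
      rw [he' i, he' j] at h1
      have h2 : ((j : ℕ) : ℕ∞) ≤ (((i : ℕ) + 1 : ℕ) : ℕ∞) := by push_cast; exact h1
      have h3 : (j : ℕ) ≤ (i : ℕ) + 1 := by exact_mod_cast h2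
      omega
  by_cases hfin : ∀ v : V, g v ≠ ⊤
  · left
    have hTuniv : T = Finset.univ := by
      ext v; simp only [Finset.mem_univ, iff_true]; exact (hmemT v).2 (hfin v)
    have hmn : m = n := by rw [hm, hTuniv, ← hn]; simp
    let e : Fin n ≃ V :=
      (finCongr hmn.symm).trans (e₀.trans (Equiv.subtypeUnivEquiv (fun v => (hmemT v).2 (hfin v))))
    have hprop : ∀ i : Fin n, g (e i) = ((i : ℕ) : ℕ∞) := by
      intro i
      have := he₀ ((finCongr hmn.symm) i)
      simpa [e, Equiv.subtypeUnivEquiv] using this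
    obtain ⟨h1, h2⟩ := harcs n e hprop
    exact ⟨e, h1, h2⟩
  · push_neg at hfin
    obtain ⟨z, hz⟩ := hfin
    right
    have hzuniq : ∀ v, g v = ⊤ → v = z := fun v hv => hginj (show g v = g z from hv.trans hz.symm)
    have hsource : ∀ v : V, ¬ A v z := by
      intro v hAv
      rcases eq_or_ne v z with rfl | hvz
      · exact hirr _ hAv
      · have hv : g v ≠ ⊤ := fun h => hvz (hzuniq v h)
        have h1 : g z ≤ g v + 1 := ddist_le_arc hAv
        rw [hz, top_le_iff] at h1
        rcases WithTop.add_eq_top.mp h1 with h | h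
        · exact hv h
        · exact (by simp : (1 : ℕ∞) ≠ ⊤) h
    have hTne : ∀ v, v ∈ T ↔ v ≠ z := by
      intro v
      rw [hmemT]
      constructor
      · intro hv hvz; exact hv (hvz ▸ hz)
      · intro hvz hv; exact hvz (hzuniq v hv)
    have hmn : m = n - 1 := by
      have h1 : Fintype.card {v // v ∈ T} = m := by simp [Fintype.card_coe, hm]
      have h2 : Fintype.card {v // v ∈ T} = Fintype.card {v : V // v ≠ z} :=
        Fintype.card_congr (Equiv.subtypeEquivRight hTne)
      have h3 : Fintype.card {v : V // v ≠ z} = n - 1 := by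
        have h4 := Set.card_ne_eq z
        rw [hn] at h4
        calc Fintype.card {v : V // v ≠ z}
            = Fintype.card {v : V | v ≠ z} :=
              Fintype.card_congr (Equiv.subtypeEquivRight (by simp [Set.mem_setOf_eq]))
          _ = n - 1 := h4
      rw [← h1, h2, h3]
    refine ⟨z, hsource, ?_⟩
    let e : Fin (n - 1) ≃ {v : V // v ≠ z} :=
      (finCongr hmn.symm).trans (e₀.trans (Equiv.subtypeEquivRight hTne))
    have hprop : ∀ i : Fin (n - 1), g (e i).1 = ((i : ℕ) : ℕ∞) := by
      intro i
      have := he₀ ((finCongr hmn.symm) i)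
      exact this
    obtain ⟨h1, h2⟩ := harcs (n - 1) (fun i => (e i).1) hprop
    exact ⟨e, h1, h2⟩
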